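/- arXiv:math/0410333 — 2 statements merged into one kernel-verified Lean document; each statement's English description precedes it below -/
import Mathlib

section
/- For any τ in the upper half plane and any real R ≥ 1, the number of pairs of integers (c,d) with R ≤ |cτ+d| < R+1 is at most C(τ)·R for some constant C(τ) depending only on τ. -/
open Complex MeasureTheory Metric
open scoped ENNReal

theorem stmt_1 (τ : ℂ) (hτ : 0 < τ.im) :
    ∃ C : ℝ, ∀ R : ℝ, 1 ≤ R →
      ((Set.ncard {p : ℤ × ℤ | R ≤ ‖(p.1 : ℂ) * τ + (p.2 : ℂ)‖ ∧
        ‖(p.1 : ℂ) * τ + (p.2 : ℂ)‖ < R + 1} : ℝ)) ≤ C * R := by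
  set y : ℝ := τ.im with hy
  set δ : ℝ := min y 1 with hδ
  have hδpos : 0 < δ := lt_min hτ one_pos
  have hδ1 : δ ≤ 1 := min_le_right _ _
  set ε : ℝ := δ / 2 with hε
  have hεpos : 0 < ε := by positivity
  have hε2 : ε ≤ 1 / 2 := by rw [hε]; linarith
  -- separation lemma
  have key : ∀ c d : ℤ, ¬(c = 0 ∧ d = 0) → δ ≤ ‖(c : ℂ) * τ + (d : ℂ)‖ := by
    intro c d hcd
    by_cases hc : c = 0
    · have hd : d ≠ 0 := fun h => hcd ⟨hc, h⟩
      subst hc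
      simp only [Int.cast_zero, zero_mul, zero_add, Complex.norm_intCast]
      calc δ ≤ 1 := hδ1
        _ ≤ |(d : ℝ)| := by exact_mod_cast Int.one_le_abs hd
    · have him : ((c : ℂ) * τ + (d : ℂ)).im = (c : ℝ) * y := by simp [hy]
      calc δ ≤ y := min_le_left _ _
        _ ≤ |(c : ℝ)| * y := by
            nlinarith [(by exact_mod_cast Int.one_le_abs hc : (1:ℝ) ≤ |(c:ℝ)|)]
        _ = |((c : ℂ) * τ + (d : ℂ)).im| := by rw [him, abs_mul, abs_of_pos hτ]
        _ ≤ ‖(c : ℂ) * τ + (d : ℂ)‖ := Complex.abs_im_le_norm _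
  refine ⟨6 / ε ^ 2, fun R hR => ?_⟩
  set f : ℤ × ℤ → ℂ := fun p => (p.1 : ℂ) * τ + (p.2 : ℂ) with hf
  set S : Set (ℤ × ℤ) := {p : ℤ × ℤ | R ≤ ‖(p.1 : ℂ) * τ + (p.2 : ℂ)‖ ∧
        ‖(p.1 : ℂ) * τ + (p.2 : ℂ)‖ < R + 1} with hS
  have hSf : ∀ p ∈ S, R ≤ ‖f p‖ ∧ ‖f p‖ < R + 1 := fun p hp => hp
  -- finiteness
  have hfin : S.Finite := by
    set M : ℤ := ⌈(R + 1) / y + ((R + 1) + (R + 1) / y * ‖τ‖)⌉ with hM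
    apply Set.Finite.subset ((Set.finite_Icc (-M) M).prod (Set.finite_Icc (-M) M))
    intro p hp
    obtain ⟨h1, h2⟩ := hSf p hp
    have hcy : |(p.1 : ℝ)| * y ≤ R + 1 := by
      have him : (f p).im = (p.1 : ℝ) * y := by simp [hf, hy]
      calc |(p.1 : ℝ)| * y = |(f p).im| := by rw [him, abs_mul, abs_of_pos hτ]
        _ ≤ ‖f p‖ := Complex.abs_im_le_norm _
        _ ≤ R + 1 := h2.le
    have hc : |(p.1 : ℝ)| ≤ (R + 1) / y := by rw [le_div_iff₀ hτ]; exact hcy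
    have hd : |(p.2 : ℝ)| ≤ (R + 1) + (R + 1) / y * ‖τ‖ := by
      have hpd : (p.2 : ℂ) = f p - (p.1 : ℂ) * τ := by rw [hf]; ring
      calc |(p.2 : ℝ)| = ‖(p.2 : ℂ)‖ := (Complex.norm_intCast _).symm
        _ = ‖f p - (p.1 : ℂ) * τ‖ := by rw [hpd]
        _ ≤ ‖f p‖ + ‖(p.1 : ℂ) * τ‖ := by
            simpa [sub_eq_add_neg] using norm_add_le (f p) (-((p.1:ℂ)*τ))
        _ ≤ (R + 1) + (R + 1) / y * ‖τ‖ := by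
            have habs : ‖(p.1 : ℂ) * τ‖ = |(p.1 : ℝ)| * ‖τ‖ := by
              rw [norm_mul, Complex.norm_intCast]
            rw [habs]
            have h0 := norm_nonneg τ
            nlinarith
    have hMb : (R + 1) / y + ((R + 1) + (R + 1) / y * ‖τ‖) ≤ (M : ℝ) := Int.le_ceil _
    have h1y : (0:ℝ) ≤ (R+1)/y := by positivity
    have h2y : (0:ℝ) ≤ (R + 1) + (R + 1) / y * ‖τ‖ := by positivity
    have hc' : |p.1| ≤ M := by
      have : |(p.1 : ℝ)| ≤ (M : ℝ) := by linarith
      exact_mod_cast (by push_cast; exact this : (|p.1| : ℝ) ≤ (M : ℝ)) 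
    have hd' : |p.2| ≤ M := by
      have : |(p.2 : ℝ)| ≤ (M : ℝ) := by linarith
      exact_mod_cast (by push_cast; exact this : (|p.2| : ℝ) ≤ (M : ℝ))
    exact ⟨Set.mem_Icc.2 (abs_le.1 hc'), Set.mem_Icc.2 (abs_le.1 hd')⟩
  -- now the packing argument
  set T : Finset (ℤ × ℤ) := hfin.toFinset with hT
  have hcard : S.ncard = T.card := Set.ncard_eq_toFinset_card S hfin
  -- separation between images
  have hsep : ∀ p ∈ T, ∀ q ∈ T, p ≠ q → δ ≤ dist (f p) (f q) := by
    intro p _ q _ hpq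
    have hfd : f p - f q = ((p.1 - q.1 : ℤ) : ℂ) * τ + ((p.2 - q.2 : ℤ) : ℂ) := by
      rw [hf]; push_cast; ring
    have hne : ¬(p.1 - q.1 = 0 ∧ p.2 - q.2 = 0) := by
      rintro ⟨h1, h2⟩
      exact hpq (Prod.ext (by omega) (by omega))
    rw [Complex.dist_eq, hfd]
    exact key _ _ hne
  have hdisj : (T : Set (ℤ × ℤ)).PairwiseDisjoint (fun p => Metric.ball (f p) ε) := by
    intro p hp q hq hpq
    apply Metric.ball_disjoint_ball
    have := hsep p (by simpa using hp) q (by simpa using hq) hpq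
    rw [hε]; linarith
  have hmeas : volume (⋃ p ∈ T, Metric.ball (f p) ε)
      = T.card * ENNReal.ofReal (ε ^ 2 * Real.pi) := by
    rw [measure_biUnion_finset hdisj (fun p _ => measurableSet_ball)]
    have hb : ∀ p : ℤ × ℤ, volume (Metric.ball (f p) ε) = ENNReal.ofReal (ε ^ 2 * Real.pi) := by
      intro p
      rw [Complex.volume_ball, ← ENNReal.ofReal_pow hεpos.le,
        ENNReal.ofReal_mul (by positivity)]
      congr 1
      rw [← NNReal.coe_real_pi, ENNReal.ofReal_coe_nnreal]
    simp [hb, Finset.sum_const, nsmul_eq_mul]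
  -- union contained in annulus
  have hsub : (⋃ p ∈ T, Metric.ball (f p) ε) ⊆
      Metric.closedBall 0 (R + 1 + ε) \ Metric.ball 0 (R - ε) := by
    intro z hz
    simp only [Set.mem_iUnion] at hz
    obtain ⟨p, hpT, hzp⟩ := hz
    have hpS : p ∈ S := by rw [hT] at hpT; exact (Set.Finite.mem_toFinset hfin).1 hpT
    obtain ⟨h1, h2⟩ := hSf p hpS
    rw [Metric.mem_ball, Complex.dist_eq] at hzp
    have habs : ‖z‖ = dist z 0 := by simp [Complex.dist_eq]
    have htri1 : ‖z‖ ≤ ‖f p‖ + ‖z - f p‖ := by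
      simpa using norm_add_le (f p) (z - f p)
    have htri2 : ‖f p‖ ≤ ‖z‖ + ‖z - f p‖ := by
      have := norm_add_le z (f p - z)
      simpa [norm_sub_rev z (f p), show z + (f p - z) = f p by ring] using this
    constructor
    · rw [Metric.mem_closedBall, ← habs]; linarith
    · intro hzb
      rw [Metric.mem_ball, ← habs] at hzb
      linarith
  -- measure comparison
  have hub : (⋃ p ∈ T, Metric.ball (f p) ε) ∪ Metric.ball 0 (R - ε) ⊆
      Metric.closedBall (0 : ℂ) (R + 1 + ε) := by
    rintro z (hz | hz)
    · exact ((hsub hz).1)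
    · rw [Metric.mem_ball] at hz
      rw [Metric.mem_closedBall]
      linarith
  have hdis2 : Disjoint (⋃ p ∈ T, Metric.ball (f p) ε) (Metric.ball (0 : ℂ) (R - ε)) := by
    rw [Set.disjoint_right]
    intro z hz hz2
    exact (hsub hz2).2 hz
  have hmain : (T.card : ℝ≥0∞) * ENNReal.ofReal (ε ^ 2 * Real.pi)
      + ENNReal.ofReal ((R - ε) ^ 2 * Real.pi) ≤ ENNReal.ofReal ((R + 1 + ε) ^ 2 * Real.pi) := by
    have hvb : volume (Metric.ball (0 : ℂ) (R - ε)) = ENNReal.ofReal ((R - ε) ^ 2 * Real.pi) := by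
      rw [Complex.volume_ball, ← ENNReal.ofReal_pow (by linarith : (0:ℝ) ≤ R - ε),
        ENNReal.ofReal_mul (by positivity)]
      congr 1
      rw [← NNReal.coe_real_pi, ENNReal.ofReal_coe_nnreal]
    have hvc : volume (Metric.closedBall (0 : ℂ) (R + 1 + ε))
        = ENNReal.ofReal ((R + 1 + ε) ^ 2 * Real.pi) := by
      rw [Complex.volume_closedBall, ← ENNReal.ofReal_pow (by linarith : (0:ℝ) ≤ R + 1 + ε),
        ENNReal.ofReal_mul (by positivity)]
      congr 1
      rw [← NNReal.coe_real_pi, ENNReal.ofReal_coe_nnreal]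
    calc (T.card : ℝ≥0∞) * ENNReal.ofReal (ε ^ 2 * Real.pi)
        + ENNReal.ofReal ((R - ε) ^ 2 * Real.pi)
        = volume ((⋃ p ∈ T, Metric.ball (f p) ε) ∪ Metric.ball (0 : ℂ) (R - ε)) := by
          rw [measure_union hdis2 measurableSet_ball, hmeas, hvb]
      _ ≤ volume (Metric.closedBall (0 : ℂ) (R + 1 + ε)) := measure_mono hub
      _ = ENNReal.ofReal ((R + 1 + ε) ^ 2 * Real.pi) := hvc
  -- convert to reals
  have hreal : (T.card : ℝ) * (ε ^ 2 * Real.pi) + (R - ε) ^ 2 * Real.pi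
      ≤ (R + 1 + ε) ^ 2 * Real.pi := by
    have h1 : (T.card : ℝ≥0∞) * ENNReal.ofReal (ε ^ 2 * Real.pi)
        + ENNReal.ofReal ((R - ε) ^ 2 * Real.pi)
        = ENNReal.ofReal ((T.card : ℝ) * (ε ^ 2 * Real.pi) + (R - ε) ^ 2 * Real.pi) := by
      rw [ENNReal.ofReal_add (by positivity) (by positivity)]
      congr 1
      rw [← ENNReal.ofReal_natCast T.card, ← ENNReal.ofReal_mul (Nat.cast_nonneg _)]
    rw [h1] at hmain
    exact (ENNReal.ofReal_le_ofReal_iff (by positivity)).1 hmain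
  -- final arithmetic
  rw [hcard]
  have hπ := Real.pi_pos
  rw [div_mul_eq_mul_div, le_div_iff₀ (by positivity : (0:ℝ) < ε ^ 2)]
  have hA : (R + 1 + ε) ^ 2 - (R - ε) ^ 2 ≤ 6 * R := by
    nlinarith [mul_nonneg (by linarith : (0:ℝ) ≤ R) (by linarith : (0:ℝ) ≤ 1/2 - ε)]
  have h7 : (T.card : ℝ) * ε ^ 2 * Real.pi ≤ 6 * R * Real.pi := by
    nlinarith [hreal, hA, hπ, sq_nonneg (R - ε)]
  exact le_of_mul_le_mul_right h7 hπ
end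

section
/- For k ≥ 3, the twisted Eisenstein series satisfies E_{k,i;h}(τ) = (1/φ(l)) ∑_{j=1}^{φ(l)} (∑_{t∈(ℤ/lℤ)*} e^{-2πi·ti/l} χ_j^{-1}(t)) L(χ_j, k) Ê_{k,χ_j;h}(τ), where L(χ,k) = ∑_{n≥1, gcd(n,l)=1} χ(n) n^{-k} and Ê_{k,χ;h}(τ) = ∑_{c∈lℤ} ∑_{d∈ℤ, gcd(c,d)=1} (cτ+d)^{-k} χ(d) e^{2πi·Re H(-d/c)}. -/
open Complex

/-- The phase factor `e^{2πi Re H(-d/c)}`, with the convention `H(-d/0) = 0`. -/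
noncomputable def twistPhase (H : ℂ → ℂ) (c d : ℤ) : ℂ :=
  if c = 0 then 1
  else Complex.exp (2 * (Real.pi : ℂ) * Complex.I * (((H (-(d : ℂ) / (c : ℂ))).re : ℂ)))

/-- The `(c,d)` term of the twisted Eisenstein series `E_{k,i;h}`. -/
noncomputable def twistedTerm (l k : ℕ) (i : ℤ) (H : ℂ → ℂ) (τ : ℂ) (p : ℤ × ℤ) : ℂ :=
  if (l : ℤ) ∣ p.1 ∧ Int.gcd p.2 l = 1 then
    ((p.1 : ℂ) * τ + (p.2 : ℂ)) ^ (-(k : ℤ)) *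
      Complex.exp (-(2 * (Real.pi : ℂ) * Complex.I) * (p.2 : ℂ) * (i : ℂ) / (l : ℂ)) *
      twistPhase H p.1 p.2
  else 0

/-- The twisted Eisenstein series `E_{k,i;h}(τ)`, where `H` is the antiderivative of `h`. -/
noncomputable def twistedEis (l k : ℕ) (i : ℤ) (H : ℂ → ℂ) (τ : ℂ) : ℂ :=
  ∑' p : ℤ × ℤ, twistedTerm l k i H τ p

/-- The `(c,d)` term of the auxiliary twisted Eisenstein series `Ê_{k,χ;h}`. -/
noncomputable def twistedTermHat (l k : ℕ) (χ : DirichletCharacter ℂ l) (H : ℂ → ℂ)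
    (τ : ℂ) (p : ℤ × ℤ) : ℂ :=
  if (l : ℤ) ∣ p.1 ∧ Int.gcd p.1 p.2 = 1 then
    ((p.1 : ℂ) * τ + (p.2 : ℂ)) ^ (-(k : ℤ)) * χ (p.2 : ZMod l) * twistPhase H p.1 p.2
  else 0

/-- The auxiliary twisted Eisenstein series `Ê_{k,χ;h}(τ)`. -/
noncomputable def twistedEisHat (l k : ℕ) (χ : DirichletCharacter ℂ l) (H : ℂ → ℂ)
    (τ : ℂ) : ℂ :=
  ∑' p : ℤ × ℤ, twistedTermHat l k χ H τ p

/-- The Dirichlet L-value `L(χ,k) = ∑_{n ≥ 1, gcd(n,l)=1} χ(n) n^{-k}`. -/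
noncomputable def LVal (l k : ℕ) (χ : DirichletCharacter ℂ l) : ℂ :=
  ∑' n : ℕ, if Nat.gcd (n + 1) l = 1 then
    χ ((n + 1 : ℕ) : ZMod l) * ((n : ℂ) + 1) ^ (-(k : ℤ)) else 0

section Aux

open Complex

lemma norm_exp_I' (r : ℝ) : ‖Complex.exp ((r : ℂ) * I)‖ = 1 := by
  simpa using Complex.abs_exp_ofReal_mul_I r

lemma norm_expi (l : ℕ) (m j : ℤ) :
    ‖Complex.exp (-(2 * (Real.pi : ℂ) * Complex.I) * (m : ℂ) * (j : ℂ) / (l : ℂ))‖ = 1 := by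
  have h : -(2 * (Real.pi : ℂ) * Complex.I) * (m : ℂ) * (j : ℂ) / (l : ℂ)
      = ((-(2 * Real.pi * m * j / l) : ℝ) : ℂ) * I := by push_cast; ring
  rw [h, norm_exp_I']

lemma norm_twistPhase (H : ℂ → ℂ) (c d : ℤ) : ‖twistPhase H c d‖ = 1 := by
  unfold twistPhase
  split_ifs with h
  · simp
  · have h2 : 2 * (Real.pi : ℂ) * Complex.I * (((H (-(d : ℂ) / (c : ℂ))).re : ℂ))
        = ((2 * Real.pi * (H (-(d : ℂ) / (c : ℂ))).re : ℝ) : ℂ) * I := by push_cast; ring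
    rw [h2, norm_exp_I']

lemma twistPhase_mul (H : ℂ → ℂ) (m c d : ℤ) (hm : m ≠ 0) :
    twistPhase H (m * c) (m * d) = twistPhase H c d := by
  unfold twistPhase
  by_cases hc : c = 0
  · simp [hc]
  · rw [if_neg (by exact mul_ne_zero hm hc), if_neg hc]
    congr 3
    have hm' : (m : ℂ) ≠ 0 := Int.cast_ne_zero.mpr hm
    push_cast
    rw [neg_div, neg_div, mul_div_mul_left _ _ hm']

lemma exp_congr' (l : ℕ) [NeZero l] (j a b : ℤ) (h : (a : ZMod l) = (b : ZMod l)) :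
    Complex.exp (-(2 * (Real.pi : ℂ) * Complex.I) * (a : ℂ) * (j : ℂ) / (l : ℂ))
      = Complex.exp (-(2 * (Real.pi : ℂ) * Complex.I) * (b : ℂ) * (j : ℂ) / (l : ℂ)) := by
  have hl : (l : ℂ) ≠ 0 := Nat.cast_ne_zero.mpr (NeZero.ne l)
  obtain ⟨m, hm⟩ : (l : ℤ) ∣ b - a := (ZMod.intCast_eq_intCast_iff _ _ _).mp h |>.dvd
  have hb : (b : ℂ) = (a : ℂ) + (l : ℂ) * (m : ℂ) := by
    have : b = a + l * m := by linarith
    exact_mod_cast congrArg (Int.cast : ℤ → ℂ) this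
  have key : -(2 * (Real.pi : ℂ) * Complex.I) * (b : ℂ) * (j : ℂ) / (l : ℂ)
      = -(2 * (Real.pi : ℂ) * Complex.I) * (a : ℂ) * (j : ℂ) / (l : ℂ)
        + ((-(m * j) : ℤ) : ℂ) * (2 * (Real.pi : ℂ) * Complex.I) := by
    rw [hb]; push_cast; field_simp; ring
  rw [key, Complex.exp_add, Complex.exp_int_mul_two_pi_mul_I, mul_one]

lemma summable_pow (k : ℕ) (hk : 3 ≤ k) (τ : ℂ) (hτ : 0 < τ.im) :
    Summable fun p : ℤ × ℤ => ‖((p.1 : ℂ) * τ + (p.2 : ℂ)) ^ (-(k : ℤ))‖ := by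
  set z : UpperHalfPlane := ⟨τ, hτ⟩ with hz
  have h2k : (2 : ℝ) < (k : ℝ) := by
    have : (2:ℕ) < k := by omega
    exact_mod_cast this
  have hs := (EisensteinSeries.summable_one_div_norm_rpow h2k).mul_left
    (EisensteinSeries.r z ^ (-(k : ℝ)))
  have hs2 : Summable fun p : ℤ × ℤ =>
      EisensteinSeries.r z ^ (-(k : ℝ)) * ‖(finTwoArrowEquiv ℤ).symm p‖ ^ (-(k : ℝ)) :=
    ((finTwoArrowEquiv ℤ).symm.summable_iff).mpr hs
  refine Summable.of_nonneg_of_le (fun p => norm_nonneg _) (fun p => ?_) hs2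
  have hb := EisensteinSeries.summand_bound z (k := (k : ℝ)) (by positivity) ![p.1, p.2]
  have hcoe : (z : ℂ) = τ := rfl
  simp only [Matrix.cons_val_zero, Matrix.cons_val_one, Matrix.head_cons, hcoe] at hb
  have hnorm : ‖((p.1 : ℂ) * τ + (p.2 : ℂ)) ^ (-(k : ℤ))‖
      = ‖(p.1 : ℂ) * τ + (p.2 : ℂ)‖ ^ (-(k : ℝ)) := by
    rw [norm_zpow, ← Real.rpow_intCast]
    norm_num
  rw [hnorm]
  convert hb using 3
  rfl

lemma summable_L (l k : ℕ) (hk : 3 ≤ k) (χ : DirichletCharacter ℂ l) :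
    Summable fun n : ℕ => ‖if Nat.gcd (n + 1) l = 1 then
      χ ((n + 1 : ℕ) : ZMod l) * ((n : ℂ) + 1) ^ (-(k : ℤ)) else 0‖ := by
  have hbase : Summable fun n : ℕ => 1 / ((n + 1 : ℕ) : ℝ) ^ k := by
    have := (Real.summable_one_div_nat_pow (p := k)).mpr (by omega)
    exact (summable_nat_add_iff 1).mpr this
  refine Summable.of_nonneg_of_le (fun n => norm_nonneg _) (fun n => ?_) hbase
  split_ifs with h
  · rw [norm_mul]
    have h1 : ‖((n : ℂ) + 1) ^ (-(k : ℤ))‖ = 1 / ((n + 1 : ℕ) : ℝ) ^ k := by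
      rw [norm_zpow]
      have : ‖(n : ℂ) + 1‖ = ((n + 1 : ℕ) : ℝ) := by
        push_cast
        rw [show ((n:ℂ)+1) = (((n:ℝ)+1 : ℝ) : ℂ) by push_cast; ring, Complex.norm_real,
          Real.norm_of_nonneg (by positivity)]
      rw [this, zpow_neg, zpow_natCast, one_div]
    calc ‖χ ((n + 1 : ℕ) : ZMod l)‖ * ‖((n : ℂ) + 1) ^ (-(k : ℤ))‖
        ≤ 1 * ‖((n : ℂ) + 1) ^ (-(k : ℤ))‖ := by
          gcongr; exact DirichletCharacter.norm_le_one χ _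
      _ = 1 / ((n + 1 : ℕ) : ℝ) ^ k := by rw [one_mul, h1]
  · simp only [norm_zero]
    positivity

lemma summable_hat (l k : ℕ) (hk : 3 ≤ k) (χ : DirichletCharacter ℂ l) (H : ℂ → ℂ)
    (τ : ℂ) (hτ : 0 < τ.im) :
    Summable fun p : ℤ × ℤ => ‖twistedTermHat l k χ H τ p‖ := by
  refine Summable.of_nonneg_of_le (fun p => norm_nonneg _) (fun p => ?_)
    (summable_pow k hk τ hτ)
  rw [twistedTermHat]
  split_ifs with h
  · rw [norm_mul, norm_mul, norm_twistPhase, mul_one]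
    calc ‖((p.1 : ℂ) * τ + (p.2 : ℂ)) ^ (-(k : ℤ))‖ * ‖χ ((p.2 : ℤ) : ZMod l)‖
        ≤ ‖((p.1 : ℂ) * τ + (p.2 : ℂ)) ^ (-(k : ℤ))‖ * 1 := by
          gcongr; exact DirichletCharacter.norm_le_one χ _
      _ = _ := mul_one _
  · simp only [norm_zero]
    positivity

lemma isUnit_intCast_zmod (l : ℕ) (d : ℤ) (h : Int.gcd d (l : ℤ) = 1) : IsUnit ((d : ZMod l)) := by
  have hcop : IsCoprime d (l : ℤ) := Int.isCoprime_iff_gcd_eq_one.mpr h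
  have hmap := hcop.map (Int.castRingHom (ZMod l))
  simp only [map_intCast, map_natCast, ZMod.natCast_self] at hmap
  exact isCoprime_zero_right.mp hmap

lemma gcd_d_l (l : ℕ) (c d : ℤ) (hlc : (l:ℤ) ∣ c) (hcd : Int.gcd c d = 1) :
    Int.gcd d (l:ℤ) = 1 := by
  have h1 : (Int.gcd d l : ℤ) ∣ (Int.gcd c d : ℤ) := by
    apply Int.dvd_coe_gcd
    · exact (Int.gcd_dvd_right _ _ : (Int.gcd d (l:ℤ) : ℤ) ∣ (l:ℤ)).trans hlc
    · exact (Int.gcd_dvd_left _ _ : (Int.gcd d (l:ℤ) : ℤ) ∣ d)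
  rw [hcd] at h1
  exact_mod_cast Int.eq_one_of_dvd_one (by positivity) h1

lemma ortho (l : ℕ) [NeZero l] (i : ℤ) (a : ZMod l) :
    ∑ χ : DirichletCharacter ℂ l,
      (∑ t : (ZMod l)ˣ,
        Complex.exp (-(2 * (Real.pi : ℂ) * Complex.I) * ((t : ZMod l).val : ℂ) * (i : ℂ) / (l : ℂ)) *
          (χ (t : ZMod l))⁻¹) * χ a
    = if IsUnit a then
        (l.totient : ℂ) *
          Complex.exp (-(2 * (Real.pi : ℂ) * Complex.I) * (a.val : ℂ) * (i : ℂ) / (l : ℂ))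
      else 0 := by
  haveI : NeZero ((Monoid.exponent (ZMod l)ˣ : ℂ)) :=
    ⟨Nat.cast_ne_zero.mpr Monoid.exponent_ne_zero_of_finite⟩
  set E : (ZMod l)ˣ → ℂ := fun t =>
    Complex.exp (-(2 * (Real.pi : ℂ) * Complex.I) * ((t : ZMod l).val : ℂ) * (i : ℂ) / (l : ℂ))
    with hE
  have step1 : ∀ χ : DirichletCharacter ℂ l,
      (∑ t : (ZMod l)ˣ, E t * (χ (t : ZMod l))⁻¹) * χ a
        = ∑ t : (ZMod l)ˣ, E t * (χ ((t : ZMod l))⁻¹ * χ a) := by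
    intro χ
    rw [Finset.sum_mul]
    refine Finset.sum_congr rfl fun t _ => ?_
    have hinv : (χ (t : ZMod l))⁻¹ = χ ((t : ZMod l))⁻¹ := by
      refine inv_eq_of_mul_eq_one_right ?_
      rw [← map_mul, ZMod.mul_inv_of_unit _ t.isUnit, map_one]
    rw [hinv, mul_assoc]
  rw [Finset.sum_congr rfl fun χ _ => step1 χ]
  rw [Finset.sum_comm]
  have step2 : ∀ t : (ZMod l)ˣ,
      ∑ χ : DirichletCharacter ℂ l, E t * (χ ((t : ZMod l))⁻¹ * χ a)
        = E t * (if (t : ZMod l) = a then (l.totient : ℂ) else 0) := by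
    intro t
    rw [← Finset.mul_sum, DirichletCharacter.sum_char_inv_mul_char_eq ℂ t.isUnit a]
  simp_rw [step2]
  by_cases ha : IsUnit a
  · rw [if_pos ha, Finset.sum_eq_single ha.unit]
    · rw [if_pos ha.unit_spec, hE]
      simp only [ha.unit_spec]
      ring
    · intro t _ ht
      rw [if_neg, mul_zero]
      intro hta
      exact ht (Units.ext (by rw [ha.unit_spec, hta]))
    · intro h; exact absurd (Finset.mem_univ _) h
  · rw [if_neg ha]
    refine Finset.sum_eq_zero fun t _ => ?_
    rw [if_neg, mul_zero]
    intro hta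
    exact ha (hta ▸ t.isUnit)

lemma pointwise (l k : ℕ) [NeZero l] (i : ℤ) (H : ℂ → ℂ) (τ : ℂ) (n : ℕ) (c d : ℤ) :
    (∑ χ : DirichletCharacter ℂ l,
      (∑ t : (ZMod l)ˣ,
        Complex.exp (-(2 * (Real.pi : ℂ) * Complex.I) * ((t : ZMod l).val : ℂ) * (i : ℂ) / (l : ℂ)) *
          (χ (t : ZMod l))⁻¹) *
        ((if Nat.gcd (n + 1) l = 1 then
            χ ((n + 1 : ℕ) : ZMod l) * ((n : ℂ) + 1) ^ (-(k : ℤ)) else 0) *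
          twistedTermHat l k χ H τ (c, d)))
    = if Nat.gcd (n + 1) l = 1 ∧ ((l:ℤ) ∣ c ∧ Int.gcd c d = 1) then
        (l.totient : ℂ) * (((n : ℂ) + 1) ^ (-(k : ℤ)) * ((c : ℂ) * τ + (d : ℂ)) ^ (-(k : ℤ)) *
          Complex.exp (-(2 * (Real.pi : ℂ) * Complex.I) * ((((n : ℤ) + 1) * d : ℤ) : ℂ) * (i : ℂ) / (l : ℂ)) *
          twistPhase H c d)
      else 0 := by
  by_cases hq : Nat.gcd (n + 1) l = 1 ∧ ((l:ℤ) ∣ c ∧ Int.gcd c d = 1)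
  · obtain ⟨h1, h2, h3⟩ := hq
    rw [if_pos ⟨h1, h2, h3⟩]
    have hdl : Int.gcd d (l:ℤ) = 1 := gcd_d_l l c d h2 h3
    set a : ZMod l := ((n + 1 : ℕ) : ZMod l) * ((d : ℤ) : ZMod l) with ha
    have hu : IsUnit a :=
      ((ZMod.isUnit_iff_coprime (n+1) l).mpr h1).mul (isUnit_intCast_zmod l d hdl)
    have expand : ∀ χ : DirichletCharacter ℂ l,
        (∑ t : (ZMod l)ˣ,
          Complex.exp (-(2 * (Real.pi : ℂ) * Complex.I) * ((t : ZMod l).val : ℂ) * (i : ℂ) / (l : ℂ)) *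
            (χ (t : ZMod l))⁻¹) *
          ((if Nat.gcd (n + 1) l = 1 then
              χ ((n + 1 : ℕ) : ZMod l) * ((n : ℂ) + 1) ^ (-(k : ℤ)) else 0) *
            twistedTermHat l k χ H τ (c, d))
        = ((∑ t : (ZMod l)ˣ,
            Complex.exp (-(2 * (Real.pi : ℂ) * Complex.I) * ((t : ZMod l).val : ℂ) * (i : ℂ) / (l : ℂ)) *
              (χ (t : ZMod l))⁻¹) * χ a) *
            (((n : ℂ) + 1) ^ (-(k : ℤ)) * ((c : ℂ) * τ + (d : ℂ)) ^ (-(k : ℤ)) * twistPhase H c d) := by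
      intro χ
      rw [if_pos h1]
      have hhat : twistedTermHat l k χ H τ (c, d)
          = ((c : ℂ) * τ + (d : ℂ)) ^ (-(k : ℤ)) * χ ((d : ℤ) : ZMod l) * twistPhase H c d := by
        rw [twistedTermHat, if_pos ⟨h2, h3⟩]
      rw [hhat, ha, map_mul]
      ring
    rw [Finset.sum_congr rfl fun χ _ => expand χ, ← Finset.sum_mul, ortho l i a, if_pos hu]
    have hval : ((a.val : ℤ) : ZMod l) = ((((n : ℤ) + 1) * d : ℤ) : ZMod l) := by
      push_cast
      rw [ZMod.natCast_rightInverse a, ha]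
      push_cast
      ring
    have hexp := exp_congr' l i (a.val : ℤ) (((n : ℤ) + 1) * d) hval
    rw [show ((a.val : ℕ) : ℂ) = ((a.val : ℤ) : ℂ) by push_cast; ring, hexp]
    ring
  · rw [if_neg hq]
    refine Finset.sum_eq_zero fun χ _ => ?_
    by_cases h1 : Nat.gcd (n + 1) l = 1
    · have h23 : ¬(((l:ℤ) ∣ c) ∧ Int.gcd c d = 1) := fun h => hq ⟨h1, h⟩
      rw [show twistedTermHat l k χ H τ (c, d) = 0 by rw [twistedTermHat, if_neg h23]]
      rw [mul_zero, mul_zero]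
    · rw [if_neg h1, zero_mul, mul_zero]

end Aux

theorem stmt_8 (l k : ℕ) (hl : 0 < l) [NeZero l] (hk : 3 ≤ k) (i : ℤ) (H : ℂ → ℂ)
    (τ : ℂ) (hτ : 0 < τ.im) :
    twistedEis l k i H τ =
      (1 / (Nat.totient l : ℂ)) * ∑ χ : DirichletCharacter ℂ l,
        (∑ t : (ZMod l)ˣ,
          Complex.exp (-(2 * (Real.pi : ℂ) * Complex.I) * ((t : ZMod l).val : ℂ) * (i : ℂ) / (l : ℂ)) *
            (χ (t : ZMod l))⁻¹) *
        LVal l k χ * twistedEisHat l k χ H τ := by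
  classical
  have htot : ((l.totient : ℕ) : ℂ) ≠ 0 :=
    Nat.cast_ne_zero.mpr (Nat.totient_pos.mpr hl).ne'
  -- the subset of admissible triples
  set S : Set (ℕ × ℤ × ℤ) :=
    {q | Nat.gcd (q.1 + 1) l = 1 ∧ ((l:ℤ) ∣ q.2.1 ∧ Int.gcd q.2.1 q.2.2 = 1)} with hS
  set F : ℤ × ℤ → ℂ := fun p => ((l.totient : ℕ) : ℂ) * twistedTerm l k i H τ p with hF
  set g : ℕ × ℤ × ℤ → ℂ := fun q =>
    if Nat.gcd (q.1 + 1) l = 1 ∧ ((l:ℤ) ∣ q.2.1 ∧ Int.gcd q.2.1 q.2.2 = 1) then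
      ((l.totient : ℕ) : ℂ) *
        (((q.1 : ℂ) + 1) ^ (-(k : ℤ)) * ((q.2.1 : ℂ) * τ + (q.2.2 : ℂ)) ^ (-(k : ℤ)) *
          Complex.exp (-(2 * (Real.pi : ℂ) * Complex.I) *
            ((((q.1 : ℤ) + 1) * q.2.2 : ℤ) : ℂ) * (i : ℂ) / (l : ℂ)) *
          twistPhase H q.2.1 q.2.2)
    else 0 with hg
  set ι : ↥S → ℤ × ℤ :=
    fun s => (((s.1.1 : ℤ) + 1) * s.1.2.1, ((s.1.1 : ℤ) + 1) * s.1.2.2) with hι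
  have key : (∑ χ : DirichletCharacter ℂ l,
      (∑ t : (ZMod l)ˣ,
        Complex.exp (-(2 * (Real.pi : ℂ) * Complex.I) * ((t : ZMod l).val : ℂ) * (i : ℂ) / (l : ℂ)) *
          (χ (t : ZMod l))⁻¹) *
        LVal l k χ * twistedEisHat l k χ H τ)
      = ((l.totient : ℕ) : ℂ) * twistedEis l k i H τ := by
    have stepA : ∀ χ : DirichletCharacter ℂ l,
        (∑ t : (ZMod l)ˣ,
          Complex.exp (-(2 * (Real.pi : ℂ) * Complex.I) * ((t : ZMod l).val : ℂ) * (i : ℂ) / (l : ℂ)) *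
            (χ (t : ZMod l))⁻¹) *
          LVal l k χ * twistedEisHat l k χ H τ
        = ∑' q : ℕ × ℤ × ℤ,
            (∑ t : (ZMod l)ˣ,
              Complex.exp (-(2 * (Real.pi : ℂ) * Complex.I) * ((t : ZMod l).val : ℂ) * (i : ℂ) / (l : ℂ)) *
                (χ (t : ZMod l))⁻¹) *
              ((if Nat.gcd (q.1 + 1) l = 1 then
                  χ ((q.1 + 1 : ℕ) : ZMod l) * ((q.1 : ℂ) + 1) ^ (-(k : ℤ)) else 0) *
                twistedTermHat l k χ H τ q.2) := by
      intro χ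
      rw [mul_assoc, LVal, twistedEisHat,
        tsum_mul_tsum_of_summable_norm (summable_L l k hk χ) (summable_hat l k hk χ H τ hτ),
        ← tsum_mul_left]
    have hsummq : ∀ χ : DirichletCharacter ℂ l, Summable fun q : ℕ × ℤ × ℤ =>
        (∑ t : (ZMod l)ˣ,
          Complex.exp (-(2 * (Real.pi : ℂ) * Complex.I) * ((t : ZMod l).val : ℂ) * (i : ℂ) / (l : ℂ)) *
            (χ (t : ZMod l))⁻¹) *
          ((if Nat.gcd (q.1 + 1) l = 1 then
              χ ((q.1 + 1 : ℕ) : ZMod l) * ((q.1 : ℂ) + 1) ^ (-(k : ℤ)) else 0) *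
            twistedTermHat l k χ H τ q.2) := by
      intro χ
      exact (summable_mul_of_summable_norm (summable_L l k hk χ)
        (summable_hat l k hk χ H τ hτ)).mul_left _
    rw [Finset.sum_congr rfl fun χ _ => stepA χ, ← Summable.tsum_finsetSum fun χ _ => hsummq χ]
    have stepC : ∀ q : ℕ × ℤ × ℤ,
        (∑ χ : DirichletCharacter ℂ l,
          (∑ t : (ZMod l)ˣ,
            Complex.exp (-(2 * (Real.pi : ℂ) * Complex.I) * ((t : ZMod l).val : ℂ) * (i : ℂ) / (l : ℂ)) *
              (χ (t : ZMod l))⁻¹) *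
            ((if Nat.gcd (q.1 + 1) l = 1 then
                χ ((q.1 + 1 : ℕ) : ZMod l) * ((q.1 : ℂ) + 1) ^ (-(k : ℤ)) else 0) *
              twistedTermHat l k χ H τ q.2))
        = g q := by
      intro q
      exact pointwise l k i H τ q.1 q.2.1 q.2.2
    rw [tsum_congr stepC]
    have hsupp : Function.support g ⊆ S := by
      intro q hq
      by_contra h
      exact hq (if_neg h)
    rw [← tsum_subtype_eq_of_support_subset hsupp]
    have stepE : ∀ s : ↥S, g (s : ℕ × ℤ × ℤ) = F (ι s) := by
      rintro ⟨⟨n, c, d⟩, hm⟩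
      obtain ⟨h1, h2, h3⟩ := hm
      have hdl : Int.gcd d (l:ℤ) = 1 := gcd_d_l l c d h2 h3
      have e1 : ((n : ℤ) + 1).natAbs = n + 1 := by omega
      have hcond2 : (l:ℤ) ∣ ((n : ℤ) + 1) * c ∧ Int.gcd (((n : ℤ) + 1) * d) (l:ℤ) = 1 := by
        refine ⟨h2.mul_left _, ?_⟩
        rw [Int.gcd, Int.natAbs_mul, e1, Int.natAbs_natCast]
        refine Nat.Coprime.mul h1 ?_
        have hh : Int.gcd d (l:ℤ) = Nat.gcd d.natAbs l := by
          rw [Int.gcd, Int.natAbs_natCast]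
        rwa [hh] at hdl
      show g (n, c, d) = F (((n : ℤ) + 1) * c, ((n : ℤ) + 1) * d)
      rw [hg, hF]
      simp only
      rw [if_pos ⟨h1, h2, h3⟩, twistedTerm, if_pos hcond2,
        twistPhase_mul H ((n : ℤ) + 1) c d (by omega)]
      have hfac : (((((n : ℤ) + 1) * c : ℤ)) : ℂ) * τ + ((((n : ℤ) + 1) * d : ℤ) : ℂ)
          = ((n : ℂ) + 1) * ((c : ℂ) * τ + (d : ℂ)) := by push_cast; ring
      rw [hfac, mul_zpow]
    rw [tsum_congr stepE]
    have hinj : Function.Injective ι := by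
      rintro ⟨⟨n, c, d⟩, hm1⟩ ⟨⟨n', c', d'⟩, hm2⟩ hss
      obtain ⟨a1, a2, a3⟩ := hm1
      obtain ⟨b1, b2, b3⟩ := hm2
      rw [hι] at hss
      simp only [Prod.mk.injEq] at hss
      obtain ⟨e1, e2⟩ := hss
      have hgcd : Int.gcd (((n : ℤ) + 1) * c) (((n : ℤ) + 1) * d)
          = Int.gcd (((n' : ℤ) + 1) * c') (((n' : ℤ) + 1) * d') := by rw [e1, e2]
      rw [Int.gcd_mul_left, Int.gcd_mul_left, a3, b3] at hgcd
      have hnn : n = n' := by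
        have h1 : ((n : ℤ) + 1).natAbs = n + 1 := by omega
        have h2 : ((n' : ℤ) + 1).natAbs = n' + 1 := by omega
        rw [h1, h2] at hgcd
        omega
      subst hnn
      have hne : ((n : ℤ) + 1) ≠ 0 := by omega
      have hc : c = c' := mul_left_cancel₀ hne e1
      have hd : d = d' := mul_left_cancel₀ hne e2
      subst hc; subst hd
      rfl
    rw [hinj.tsum_eq]
    · rw [hF, twistedEis, tsum_mul_left]
    · -- support F ⊆ range ι
      intro p hp
      have hT : twistedTerm l k i H τ p ≠ 0 := by
        intro h0
        apply hp
        rw [hF]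
        simp only [h0, mul_zero]
      rw [twistedTerm] at hT
      by_cases hc : (l:ℤ) ∣ p.1 ∧ Int.gcd p.2 (l:ℤ) = 1
      swap
      · rw [if_neg hc] at hT; exact absurd rfl hT
      obtain ⟨hc1, hc2⟩ := hc
      rw [if_pos ⟨hc1, hc2⟩] at hT
      have hA : ((p.1 : ℂ) * τ + (p.2 : ℂ)) ≠ 0 := by
        intro h0
        apply hT
        rw [h0, zero_zpow _ (by omega : -(k : ℤ) ≠ 0), zero_mul, zero_mul]
      have hp0 : ¬(p.1 = 0 ∧ p.2 = 0) := by
        rintro ⟨u1, u2⟩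
        apply hA
        rw [u1, u2]
        simp
      have hG : 0 < Int.gcd p.1 p.2 := by
        rcases not_and_or.mp hp0 with h | h
        · exact Int.gcd_pos_of_ne_zero_left p.2 h
        · exact Int.gcd_pos_of_ne_zero_right p.1 h
      set G : ℕ := Int.gcd p.1 p.2 with hGdef
      have hdvd1 : (G : ℤ) ∣ p.1 := Int.gcd_dvd_left _ _
      have hdvd2 : (G : ℤ) ∣ p.2 := Int.gcd_dvd_right _ _
      have hGl : Nat.gcd G l = 1 := by
        have hd : ((Nat.gcd G l : ℕ) : ℤ) ∣ (Int.gcd p.2 (l:ℤ) : ℤ) := by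
          refine Int.dvd_coe_gcd ?_ ?_
          · exact (Int.natCast_dvd_natCast.mpr (Nat.gcd_dvd_left G l)).trans hdvd2
          · exact Int.natCast_dvd_natCast.mpr (Nat.gcd_dvd_right G l)
        rw [hc2] at hd
        exact_mod_cast Int.eq_one_of_dvd_one (by positivity) hd
      have hmem : ((G - 1 : ℕ), (p.1 / (G : ℤ), p.2 / (G : ℤ))) ∈ S := by
        refine ⟨?_, ?_, ?_⟩
        · simpa [Nat.sub_add_cancel hG] using hGl
        · have hfac : (G : ℤ) * (p.1 / (G : ℤ)) = p.1 := Int.mul_ediv_cancel' hdvd1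
          have hcop : IsCoprime ((l : ℤ)) ((G : ℤ)) := by
            rw [Int.isCoprime_iff_gcd_eq_one, Int.gcd, Int.natAbs_natCast, Int.natAbs_natCast]
            exact Nat.coprime_comm.mp hGl
          exact hcop.dvd_of_dvd_mul_left (by rw [hfac]; exact hc1)
        · exact Int.gcd_div_gcd_div_gcd hG
      refine ⟨⟨((G - 1 : ℕ), (p.1 / (G : ℤ), p.2 / (G : ℤ))), hmem⟩, ?_⟩
      rw [hι]
      have hcast : (((G - 1 : ℕ) : ℤ)) + 1 = (G : ℤ) := by
        rw [Nat.cast_sub hG]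
        push_cast
        ring
      refine Prod.ext_iff.mpr ⟨?_, ?_⟩
      · simp only [hcast]
        exact Int.mul_ediv_cancel' hdvd1
      · simp only [hcast]
        exact Int.mul_ediv_cancel' hdvd2
  rw [key, one_div, inv_mul_cancel_left₀ htot]
end
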